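/- Let A = [[4, 0], [0, 1]], B = [[5/2, 3/2], [3/2, 5/2]], and C = [[25/8, 3/4], [3/4, 13/8]], viewed as positive definite matrices in M₂(ℂ). Then d_{1/2}(B, C) = d_{1/2}(A, C). -/

import Mathlib

open scoped ComplexOrder

/-- Real power of a square complex matrix, taken via the continuous functional calculus
(on the spectrum, which lies in `[0, ∞)` for positive semidefinite matrices). -/
noncomputable def Matrix.rpowCFC {n : Type*} [Fintype n] [DecidableEq n]
    (A : Matrix n n ℂ) (r : ℝ) : Matrix n n ℂ :=
  cfc (fun x : ℝ => x ^ r) A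

/-- The operation `A κₚ B := (A^{p/4} B^{p/2} A^{p/4})^{1/p}`. -/
noncomputable def Matrix.kappa {n : Type*} [Fintype n] [DecidableEq n]
    (p : ℝ) (A B : Matrix n n ℂ) : Matrix n n ℂ :=
  (A.rpowCFC (p / 4) * B.rpowCFC (p / 2) * A.rpowCFC (p / 4)).rpowCFC p⁻¹

/-- `d_p(X, Y) := (Tr((X + Y)/2 − X κₚ Y))^{1/2}` (the trace inside is a nonnegative real). -/
noncomputable def Matrix.dp {n : Type*} [Fintype n] [DecidableEq n]
    (p : ℝ) (X Y : Matrix n n ℂ) : ℝ :=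
  Real.sqrt ((Matrix.trace ((2 : ℂ)⁻¹ • (X + Y) - Matrix.kappa p X Y)).re)

section Aux
variable {n : Type*} [Fintype n] [DecidableEq n]

lemma aux_spectrum_nonneg {W : Matrix n n ℂ} (hW : W.PosSemidef) :
    ∀ x ∈ spectrum ℝ W, 0 ≤ x := by
  intro x hx
  rw [Matrix.IsHermitian.spectrum_real_eq_range_eigenvalues hW.isHermitian] at hx
  obtain ⟨i, rfl⟩ := hx
  exact hW.eigenvalues_nonneg i

lemma aux_rpow_inv_pow {W : Matrix n n ℂ} (hW : W.PosSemidef) (k : ℕ) (hk : k ≠ 0) :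
    (W ^ k).rpowCFC (k : ℝ)⁻¹ = W := by
  have hsa : IsSelfAdjoint W := hW.isHermitian
  have hcont : Continuous (fun x : ℝ => x ^ ((k : ℝ)⁻¹)) :=
    Real.continuous_rpow_const (by positivity)
  rw [Matrix.rpowCFC, ← cfc_pow_id (R := ℝ) W k hsa,
    ← cfc_comp (fun x : ℝ => x ^ ((k : ℝ)⁻¹)) (fun x : ℝ => x ^ k) W hsa
      hcont.continuousOn (by fun_prop)]
  calc cfc ((fun x : ℝ => x ^ ((k : ℝ)⁻¹)) ∘ (fun x : ℝ => x ^ k)) W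
      = cfc (fun x : ℝ => x) W := by
        apply cfc_congr
        intro x hx
        have hx0 : 0 ≤ x := aux_spectrum_nonneg hW x hx
        have hk0 : (k : ℝ) ≠ 0 := Nat.cast_ne_zero.mpr hk
        simp only [Function.comp_apply]
        rw [← Real.rpow_natCast x k, ← Real.rpow_mul hx0,
          mul_inv_cancel₀ hk0, Real.rpow_one]
    _ = W := cfc_id' ℝ W hsa

lemma aux_rpow_two {M : Matrix n n ℂ} (hM : IsSelfAdjoint M) :
    M.rpowCFC 2 = M ^ 2 := by
  rw [Matrix.rpowCFC, ← cfc_pow_id (R := ℝ) M 2 hM]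
  apply cfc_congr
  intro x _
  show x ^ (2 : ℝ) = x ^ (2 : ℕ)
  rw [show (2 : ℝ) = ((2 : ℕ) : ℝ) by norm_num, Real.rpow_natCast]

lemma aux_rpow_mul_self {W : Matrix n n ℂ} (hW : W.PosSemidef) {r : ℝ} (hr : 0 < r) :
    W.rpowCFC r * W.rpowCFC r = W.rpowCFC (r + r) := by
  have hsa : IsSelfAdjoint W := hW.isHermitian
  have hcr : Continuous (fun x : ℝ => x ^ r) := Real.continuous_rpow_const hr.le
  rw [Matrix.rpowCFC, Matrix.rpowCFC, ← cfc_mul (fun x : ℝ => x ^ r) (fun x : ℝ => x ^ r) W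
    hcr.continuousOn hcr.continuousOn]
  apply cfc_congr
  intro x hx
  exact (Real.rpow_add' (aux_spectrum_nonneg hW x hx) (by positivity)).symm

lemma aux_psd_fin_two (a b c : ℝ) (ha : 0 ≤ a) (hc : 0 ≤ c) (hdet : b ^ 2 ≤ a * c) :
    (!![(a : ℂ), (b : ℂ); (b : ℂ), (c : ℂ)]).PosSemidef := by
  refine Matrix.PosSemidef.of_dotProduct_mulVec_nonneg ?_ ?_
  · ext i j
    fin_cases i <;> fin_cases j <;>
      simp [Matrix.conjTranspose_apply]
  · intro x
    have expand : dotProduct (star x) (Matrix.mulVec (!![(a : ℂ), (b : ℂ); (b : ℂ), (c : ℂ)]) x) =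
        (starRingEnd ℂ) (x 0) * ((a : ℂ) * x 0 + (b : ℂ) * x 1) +
          (starRingEnd ℂ) (x 1) * ((b : ℂ) * x 0 + (c : ℂ) * x 1) := by
      simp [dotProduct, Matrix.mulVec, Fin.sum_univ_two]
    rw [expand, Complex.le_def]
    constructor
    · simp only [Complex.add_re, Complex.mul_re, Complex.add_im, Complex.mul_im,
        Complex.conj_re, Complex.conj_im, Complex.ofReal_re, Complex.ofReal_im,
        Complex.add_re, Complex.zero_re]
      rcases eq_or_lt_of_le ha with h0 | hpos
      · have hb : b = 0 := by nlinarith [sq_nonneg b]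
        subst hb
        rw [← h0]
        nlinarith [sq_nonneg ((x 0).re), sq_nonneg ((x 0).im), sq_nonneg ((x 1).re),
          sq_nonneg ((x 1).im)]
      · nlinarith [sq_nonneg (a * (x 0).re + b * (x 1).re),
          sq_nonneg (a * (x 0).im + b * (x 1).im),
          mul_nonneg (sub_nonneg.mpr hdet) (add_nonneg (sq_nonneg ((x 1).re)) (sq_nonneg ((x 1).im)))]
    · simp only [Complex.add_re, Complex.mul_re, Complex.add_im, Complex.mul_im, Complex.conj_re, Complex.conj_im, Complex.ofReal_re, Complex.ofReal_im, Complex.zero_re, Complex.zero_im]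
      ring

end Aux

lemma aux_kappa_trace {n : Type*} [Fintype n] [DecidableEq n]
    {X Q S C : Matrix n n ℂ} (hQ : Q.PosSemidef) (hS : S.PosSemidef)
    (hQ4 : Q ^ 4 = X) (hS4 : S ^ 4 = C) :
    (Matrix.kappa (1 / 2) X C).trace = (S * Q * S * Q).trace := by
  have hX : X.PosSemidef := hQ4 ▸ hQ.pow 4
  have hSq : C.rpowCFC (1 / 2 / 2) = S := by
    rw [show (1 / 2 / 2 : ℝ) = ((4 : ℕ) : ℝ)⁻¹ by norm_num, ← hS4,
      aux_rpow_inv_pow hS 4 (by norm_num)]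
  set P := X.rpowCFC (1 / 2 / 4) with hPdef
  have hPP : P * P = Q := by
    rw [hPdef, aux_rpow_mul_self hX (by norm_num : (0:ℝ) < 1 / 2 / 4),
      show (1 / 2 / 4 + 1 / 2 / 4 : ℝ) = ((4 : ℕ) : ℝ)⁻¹ by norm_num, ← hQ4,
      aux_rpow_inv_pow hQ 4 (by norm_num)]
  have hPsa : IsSelfAdjoint P := cfc_predicate _ X
  have hSsa : IsSelfAdjoint S := hS.isHermitian
  have hMsa : IsSelfAdjoint (P * S * P) := by
    rw [IsSelfAdjoint]
    simp only [star_mul, hPsa.star_eq, hSsa.star_eq, mul_assoc]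
  rw [Matrix.kappa, hSq, show ((1 / 2 : ℝ))⁻¹ = (2 : ℝ) by norm_num, ← hPdef,
    aux_rpow_two hMsa, pow_two,
    show P * S * P * (P * S * P) = P * (S * (P * P) * S * P) by
      simp only [mul_assoc],
    Matrix.trace_mul_comm, hPP]
  congr 1
  simp only [mul_assoc, hPP]

set_option maxHeartbeats 2000000 in
/-- `d_{1/2}(B, C) = d_{1/2}(A, C)` for the explicit matrices `A, B, C`. -/
theorem d_half_BC_eq_d_half_AC :
    Matrix.dp (1 / 2) (!![5/2, 3/2; 3/2, 5/2] : Matrix (Fin 2) (Fin 2) ℂ)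
        !![25/8, 3/4; 3/4, 13/8] =
      Matrix.dp (1 / 2) (!![4, 0; 0, 1] : Matrix (Fin 2) (Fin 2) ℂ)
        !![25/8, 3/4; 3/4, 13/8] := by
  -- the radicals
  set r : ℝ := Real.sqrt 2 with hrdef
  have hr0 : 0 ≤ r := Real.sqrt_nonneg 2
  have hr2 : r ^ 2 = 2 := Real.sq_sqrt (by norm_num)
  have hr2C : ((r : ℝ) : ℂ) ^ 2 = 2 := by exact_mod_cast congrArg (Complex.ofReal) hr2
  set d : ℝ := Real.sqrt (17 / 8) with hddef
  have hd0 : 0 ≤ d := Real.sqrt_nonneg _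
  have hd2 : d ^ 2 = 17 / 8 := Real.sq_sqrt (by norm_num)
  have hd2C : ((d : ℝ) : ℂ) ^ 2 = 17 / 8 := by
    rw [show ((17 : ℂ) / 8) = (((17 / 8 : ℝ)) : ℂ) by norm_num, ← hd2]
    push_cast
    ring
  set t : ℝ := Real.sqrt (3 + 2 * d) with htdef
  have ht0 : 0 < t := Real.sqrt_pos.mpr (by linarith)
  have ht2 : t ^ 2 = 3 + 2 * d := Real.sq_sqrt (by linarith)
  have ht2C : ((t : ℝ) : ℂ) ^ 2 = 3 + 2 * ((d : ℝ) : ℂ) := by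
    rw [show (3 + 2 * ((d : ℝ) : ℂ)) = (((3 + 2 * d : ℝ)) : ℂ) by push_cast; ring, ← ht2]
    push_cast
    ring
  have htC0 : ((t : ℝ) : ℂ) ≠ 0 := by
    simpa using ht0.ne'
  -- the fourth roots
  set QA : Matrix (Fin 2) (Fin 2) ℂ :=
    !![((r : ℝ) : ℂ), (((0:ℝ)) : ℂ); (((0:ℝ)) : ℂ), (((1:ℝ)) : ℂ)] with hQAdef
  set QB : Matrix (Fin 2) (Fin 2) ℂ :=
    !![((((r+1)/2 : ℝ)) : ℂ), ((((r-1)/2 : ℝ)) : ℂ);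
       ((((r-1)/2 : ℝ)) : ℂ), ((((r+1)/2 : ℝ)) : ℂ)] with hQBdef
  set SS : Matrix (Fin 2) (Fin 2) ℂ :=
    !![(((((7/4+d)/t) : ℝ)) : ℂ), ((((1/4/t) : ℝ)) : ℂ);
       ((((1/4/t) : ℝ)) : ℂ), (((((5/4+d)/t) : ℝ)) : ℂ)] with hSSdef
  -- positive semidefiniteness
  have hQApsd : QA.PosSemidef := aux_psd_fin_two r 0 1 hr0 (by norm_num) (by nlinarith)
  have hQBpsd : QB.PosSemidef :=
    aux_psd_fin_two _ _ _ (by linarith) (by linarith) (by nlinarith)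
  have hSSpsd : SS.PosSemidef := by
    refine aux_psd_fin_two _ _ _ (by positivity) (by positivity) ?_
    rw [div_pow, div_mul_div_comm, div_le_div_iff₀ (by positivity) (by positivity)]
    nlinarith [pow_pos ht0 2]
  -- fourth powers
  have hQA4 : QA ^ 4 = !![4, 0; 0, 1] := by
    have h2 : QA ^ 2 = !![(2 : ℂ), 0; 0, 1] := by
      rw [pow_two, hQAdef, Matrix.mul_fin_two]
      ext i j
      fin_cases i <;> fin_cases j <;> simp <;> push_cast <;> linear_combination hr2C
    rw [show (4 : ℕ) = 2 * 2 from rfl, pow_mul, h2, pow_two, Matrix.mul_fin_two]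
    norm_num
  have hQB4 : QB ^ 4 = !![5/2, 3/2; 3/2, 5/2] := by
    have h2 : QB ^ 2 = !![(3/2 : ℂ), 1/2; 1/2, 3/2] := by
      rw [pow_two, hQBdef, Matrix.mul_fin_two]
      ext i j
      fin_cases i <;> fin_cases j <;> simp <;> push_cast <;> linear_combination (1/2) * hr2C
    rw [show QB ^ 4 = (QB ^ 2) ^ 2 by rw [← pow_mul], h2, pow_two, Matrix.mul_fin_two]
    norm_num
  have hSS4 : SS ^ 4 = !![25/8, 3/4; 3/4, 13/8] := by
    have h2 : SS ^ 2 = !![(7/4 : ℂ), 1/4; 1/4, 5/4] := by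
      rw [pow_two, hSSdef, Matrix.mul_fin_two]
      ext i j
      fin_cases i <;> fin_cases j <;> simp <;> push_cast <;> field_simp <;>
        first
          | linear_combination (64 : ℂ) * hd2C - 112 * ht2C
          | linear_combination (-16 : ℂ) * ht2C
          | linear_combination (64 : ℂ) * hd2C - 80 * ht2C
          | linear_combination (16 : ℂ) * hd2C - 28 * ht2C
          | linear_combination (-4 : ℂ) * ht2C
          | linear_combination (16 : ℂ) * hd2C - 20 * ht2C
    rw [show SS ^ 4 = (SS ^ 2) ^ 2 by rw [← pow_mul], h2, pow_two, Matrix.mul_fin_two]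
    norm_num
  -- the key trace identity
  have hkey : (SS * QB * SS * QB).trace = (SS * QA * SS * QA).trace := by
    rw [hQAdef, hQBdef, hSSdef]
    simp only [Matrix.mul_fin_two, Matrix.trace_fin_two_of]
    push_cast
    ring
  have hk : (Matrix.kappa (1 / 2) (!![5/2, 3/2; 3/2, 5/2] : Matrix (Fin 2) (Fin 2) ℂ)
        !![25/8, 3/4; 3/4, 13/8]).trace =
      (Matrix.kappa (1 / 2) (!![4, 0; 0, 1] : Matrix (Fin 2) (Fin 2) ℂ)
        !![25/8, 3/4; 3/4, 13/8]).trace := by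
    rw [aux_kappa_trace hQBpsd hSSpsd hQB4 hSS4, aux_kappa_trace hQApsd hSSpsd hQA4 hSS4, hkey]
  rw [Matrix.dp, Matrix.dp, Matrix.trace_sub, Matrix.trace_sub, Matrix.trace_smul,
    Matrix.trace_smul, Matrix.trace_add, Matrix.trace_add, hk,
    show (!![5/2, 3/2; 3/2, 5/2] : Matrix (Fin 2) (Fin 2) ℂ).trace
        = (!![4, 0; 0, 1] : Matrix (Fin 2) (Fin 2) ℂ).trace by
      simp [Matrix.trace_fin_two_of]; norm_num]
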